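/- Let B ⊆ ℝ² and let (c_i)_{i ∈ I} = ((x_i, y_i))_{i ∈ I} be a countable family of points of the interior Int(B) of B, with signs ε = (ε_i)_{i ∈ I} ∈ {+1,−1}^I. If S_ε := B \ ⋃_{i ∈ I} l^{ε_i}(c_i) is path-connected, then for all i, j ∈ I with x_i = x_j and y_i > y_j one has ε_i ≥ ε_j; that is, it cannot happen that ε_i = −1 and ε_j = +1. -/

import Mathlib

/-- The vertical cut of `B ⊆ ℝ²` at the point `c` with sign `ε`:
`l^ε(c) = B ∩ {(x,y) | x = c.1 ∧ ε·y ≥ ε·c.2}`. -/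
def vcut (B : Set (ℝ × ℝ)) (c : ℝ × ℝ) (ε : ℝ) : Set (ℝ × ℝ) :=
  {p : ℝ × ℝ | p ∈ B ∧ p.1 = c.1 ∧ ε * c.2 ≤ ε * p.2}

/-- If the complement `S_ε = B \ l^ε` of the vertical cuts at countably many points of
the interior of `B` is path-connected, then whenever two of the points lie on the same
vertical line with `c i` above `c j`, one has `ε i ≥ ε j`. -/
theorem stmt6 {I : Type*} [Countable I] (B : Set (ℝ × ℝ))
    (c : I → ℝ × ℝ) (hc : ∀ i, c i ∈ interior B)
    (ε : I → ℝ) (hε : ∀ i, ε i = 1 ∨ ε i = -1)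
    (hpc : IsPathConnected (B \ ⋃ i, vcut B (c i) (ε i)))
    (i j : I) (hx : (c i).1 = (c j).1) (hy : (c j).2 < (c i).2) :
    ε j ≤ ε i := by
  by_contra hlt
  push_neg at hlt
  have hi : ε i = -1 := by rcases hε i with h | h <;> rcases hε j with h' | h' <;>
    simp [h, h'] at hlt ⊢ <;> linarith
  have hj : ε j = 1 := by rcases hε i with h | h <;> rcases hε j with h' | h' <;>
    simp [h, h'] at hlt ⊢ <;> linarith
  set x₀ : ℝ := (c i).1 with hx₀
  set S : Set (ℝ × ℝ) := B \ ⋃ k, vcut B (c k) (ε k) with hS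
  -- The whole vertical line x = x₀ inside B is covered by the two cuts.
  have hline : ∀ p : ℝ × ℝ, p ∈ B → p.1 = x₀ → p ∈ ⋃ k, vcut B (c k) (ε k) := by
    intro p hpB hpx
    rcases le_total (c j).2 p.2 with h | h
    · exact Set.mem_iUnion.2 ⟨j, hpB, hpx.trans hx, by rw [hj]; linarith⟩
    · exact Set.mem_iUnion.2 ⟨i, hpB, by rw [hpx], by rw [hi]; nlinarith⟩
  -- A ball around c i inside B
  obtain ⟨δ, hδpos, hball⟩ := Metric.mem_nhds_iff.1 (mem_interior_iff_mem_nhds.1 (hc i))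
  -- Choose t ∈ (0, δ) such that x₀ ± t avoids all x-coordinates of the points c k.
  set X : Set ℝ := Set.range (fun k => (c k).1) with hX
  have hXc : X.Countable := Set.countable_range _
  have hT : ((fun t => x₀ - t) ⁻¹' X ∪ (fun t => x₀ + t) ⁻¹' X).Countable := by
    apply Set.Countable.union
    · exact hXc.preimage sub_right_injective
    · exact hXc.preimage (add_right_injective x₀)
  obtain ⟨t, htT, ht0, htδ⟩ :
      ∃ t, t ∉ ((fun t => x₀ - t) ⁻¹' X ∪ (fun t => x₀ + t) ⁻¹' X) ∧ 0 < t ∧ t < δ := by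
    obtain ⟨t, htc, htI⟩ := (hT.dense_compl ℝ).exists_mem_open isOpen_Ioo
      (Set.nonempty_Ioo.2 hδpos)
    exact ⟨t, htc, htI.1, htI.2⟩
  have htL : x₀ - t ∉ X := fun h => htT (Or.inl h)
  have htR : x₀ + t ∉ X := fun h => htT (Or.inr h)
  -- The two points just left and right of c i
  have hmem : ∀ s : ℝ, s ∉ X → |s - x₀| < δ → ((s, (c i).2) : ℝ × ℝ) ∈ S := by
    intro s hs hdist
    constructor
    · apply hball
      rw [Metric.mem_ball, Prod.dist_eq]
      simp only [Real.dist_eq]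
      have : (c i) = ((c i).1, (c i).2) := rfl
      rw [this]
      simp only [max_lt_iff]
      constructor
      · simpa using hdist
      · simpa using hδpos
    · intro hmem
      obtain ⟨k, hk⟩ := Set.mem_iUnion.1 hmem
      exact hs ⟨k, hk.2.1.symm⟩
  have hL : ((x₀ - t, (c i).2) : ℝ × ℝ) ∈ S := by
    apply hmem _ htL; rw [abs_of_nonpos (by linarith)]; linarith
  have hR : ((x₀ + t, (c i).2) : ℝ × ℝ) ∈ S := by
    apply hmem _ htR; rw [abs_of_nonneg (by linarith)]; linarith
  -- Path from left point to right point
  obtain ⟨γ, hγ⟩ := hpc.joinedIn _ hL _ hR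
  -- Intermediate value theorem for the first coordinate
  have hcont : ContinuousOn (fun s => (γ.extend s).1) (Set.Icc (0:ℝ) 1) :=
    (continuous_fst.comp γ.continuous_extend).continuousOn
  have hIVT := intermediate_value_Icc (by norm_num : (0:ℝ) ≤ 1) hcont
  have hx₀mem : x₀ ∈ Set.Icc ((fun s => (γ.extend s).1) 0) ((fun s => (γ.extend s).1) 1) := by
    simp only [Path.extend_zero, Path.extend_one]
    constructor <;> simp <;> linarith
  obtain ⟨s, hs, hsx⟩ := hIVT hx₀mem
  have hγs : γ.extend s ∈ S := by rw [γ.extend_apply hs]; exact hγ _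
  exact hγs.2 (hline _ hγs.1 hsx)
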